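/- Let f(ξ) = ξ/(1−ξ) for ξ < 1 (+∞ otherwise) and γ > 0. Then for every x ∈ ℝ, p = prox_{γf}(x) is the unique solution in (−∞,1) of the cubic equation (x−p)(1−p)² = γ, and q = prox_{γ f*}(x) is the unique solution in (max{x−γ,0},+∞) of the cubic equation q³ + 2(γ−x)q² + (γ−x)² q − γ² = 0, where f*(ξ) = (√ξ−1)² for ξ ≥ 0 and +∞ otherwise. -/

import Mathlib

open scoped Classical
open Filter Set Topology

noncomputable section

/-- `f` is proper, convex and lower semicontinuous (the class `Γ₀`). -/
def Gamma0 {E : Type*} [NormedAddCommGroup E] [NormedSpace ℝ E] (f : E → EReal) : Prop :=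
  (∃ x, f x ≠ ⊤) ∧ (∀ x, f x ≠ ⊥) ∧
  (∀ x y : E, ∀ a b : ℝ, 0 ≤ a → 0 ≤ b → a + b = 1 →
    f (a • x + b • y) ≤ (a : EReal) * f x + (b : EReal) * f y) ∧
  LowerSemicontinuous f

/-- recession function of `f` with base point `x0 ∈ dom f`:
`(rec f)(x) = lim_{t→∞} (f(x0+tx)-f(x0))/t`, which by convexity equals the supremum. -/
def recFn {E : Type*} [NormedAddCommGroup E] [NormedSpace ℝ E]
    (f : E → EReal) (x0 : E) (x : E) : EReal :=
  ⨆ t ∈ Set.Ioi (0 : ℝ), (f (x0 + t • x) - f x0) * ((t⁻¹ : ℝ) : EReal)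

/-- the perspective function of `f` (recession with base point `x0 ∈ dom f`). -/
def persp {E : Type*} [NormedAddCommGroup E] [NormedSpace ℝ E]
    (f : E → EReal) (x0 : E) (p : E × ℝ) : EReal :=
  if 0 < p.2 then (p.2 : EReal) * f (p.2⁻¹ • p.1)
  else if p.2 = 0 then recFn f x0 p.1 else ⊤

/-- Fenchel conjugate. -/
def conj {E : Type*} [NormedAddCommGroup E] [InnerProductSpace ℝ E]
    (f : E → EReal) (u : E) : EReal :=
  ⨆ x, ((inner ℝ x u : ℝ) : EReal) - f x

/-- Fenchel conjugate on `ℝ`. -/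
def conjR (f : ℝ → EReal) (u : ℝ) : EReal := ⨆ x : ℝ, ((x * u : ℝ) : EReal) - f x

/-- Fenchel conjugate on `E × ℝ` (with the Hilbert direct sum inner product). -/
def conj2 {E : Type*} [NormedAddCommGroup E] [InnerProductSpace ℝ E]
    (g : E × ℝ → EReal) (q : E × ℝ) : EReal :=
  ⨆ p : E × ℝ, (((inner ℝ p.1 q.1 : ℝ) + p.2 * q.2 : ℝ) : EReal) - g p

/-- indicator function of a set. -/
def indE {E : Type*} (C : Set E) (x : E) : EReal := if x ∈ C then 0 else ⊤

/-- support function of a set. -/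
def suppFn {E : Type*} [NormedAddCommGroup E] [InnerProductSpace ℝ E]
    (C : Set E) (x : E) : EReal := ⨆ u ∈ C, ((inner ℝ u x : ℝ) : EReal)

/-- epigraph of an extended-real-valued function. -/
def epi {E : Type*} (f : E → EReal) : Set (E × ℝ) := {p | f p.1 ≤ (p.2 : EReal)}

/-- epigraph of the perspective of `f`, as a subset of `E × ℝ × ℝ`. -/
def epiPersp {E : Type*} [NormedAddCommGroup E] [NormedSpace ℝ E]
    (f : E → EReal) (x0 : E) : Set (E × ℝ × ℝ) :=
  {p | persp f x0 (p.1, p.2.1) ≤ (p.2.2 : EReal)}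

/-- `p` is the metric projection of `z` onto `C ⊆ E`. -/
def IsProjE {E : Type*} [NormedAddCommGroup E] (C : Set E) (z p : E) : Prop :=
  p ∈ C ∧ ∀ q ∈ C, ‖z - p‖ ≤ ‖z - q‖

/-- `p` is the metric projection of `z` onto `C ⊆ E ⊕ ℝ` (Hilbert direct sum distance). -/
def IsProj2 {E : Type*} [NormedAddCommGroup E] (C : Set (E × ℝ)) (z p : E × ℝ) : Prop :=
  p ∈ C ∧ ∀ q ∈ C,
    ‖z.1 - p.1‖ ^ 2 + (z.2 - p.2) ^ 2 ≤ ‖z.1 - q.1‖ ^ 2 + (z.2 - q.2) ^ 2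

/-- `p` is the metric projection of `z` onto `C ⊆ E ⊕ ℝ ⊕ ℝ` (Hilbert direct sum distance). -/
def IsProj3 {E : Type*} [NormedAddCommGroup E] (C : Set (E × ℝ × ℝ)) (z p : E × ℝ × ℝ) : Prop :=
  p ∈ C ∧ ∀ q ∈ C,
    ‖z.1 - p.1‖ ^ 2 + (z.2.1 - p.2.1) ^ 2 + (z.2.2 - p.2.2) ^ 2 ≤
      ‖z.1 - q.1‖ ^ 2 + (z.2.1 - q.2.1) ^ 2 + (z.2.2 - q.2.2) ^ 2

/-- `p = prox_{γ g}(z)` on `E`. -/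
def IsProxE {E : Type*} [NormedAddCommGroup E] (g : E → EReal) (γ : ℝ) (z p : E) : Prop :=
  ∀ y, g p + ((‖z - p‖ ^ 2 / (2 * γ) : ℝ) : EReal) ≤ g y + ((‖z - y‖ ^ 2 / (2 * γ) : ℝ) : EReal)

/-- `p = prox_{γ g}(z)` on `E ⊕ ℝ` (Hilbert direct sum distance). -/
def IsProx2 {E : Type*} [NormedAddCommGroup E] (g : E × ℝ → EReal) (γ : ℝ)
    (z p : E × ℝ) : Prop :=
  ∀ y, g p + (((‖z.1 - p.1‖ ^ 2 + (z.2 - p.2) ^ 2) / (2 * γ) : ℝ) : EReal) ≤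
    g y + (((‖z.1 - y.1‖ ^ 2 + (z.2 - y.2) ^ 2) / (2 * γ) : ℝ) : EReal)

/-- subdifferential of `f` at `x`. -/
def subdiff {E : Type*} [NormedAddCommGroup E] [InnerProductSpace ℝ E]
    (f : E → EReal) (x : E) : Set E :=
  {u | ∀ y, ((inner ℝ (y - x) u : ℝ) : EReal) + f x ≤ f y}

/-- the hyperbolic penalty `ξ ↦ ξ/(1-ξ)` for `ξ < 1`, `+∞` otherwise. -/
def fhyp (ξ : ℝ) : EReal := if ξ < 1 then ((ξ / (1 - ξ) : ℝ) : EReal) else ⊤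

lemma uniq1 (γ x p₁ p₂ : ℝ) (hγ : 0 < γ) (h1 : p₁ < 1 ∧ (x - p₁) * (1 - p₁) ^ 2 = γ)
    (h2 : p₂ < 1 ∧ (x - p₂) * (1 - p₂) ^ 2 = γ) : p₁ = p₂ := by
  obtain ⟨ha, he⟩ := h1; obtain ⟨hb, hf⟩ := h2
  by_contra hne
  rcases lt_or_gt_of_ne hne with h | h
  · have hx2 : 0 < x - p₂ := by nlinarith [sq_nonneg (1 - p₂)]
    nlinarith [mul_pos (sub_pos.2 h) (sub_pos.2 hb), sq_nonneg (1 - p₂), mul_pos hx2 (mul_pos (sub_pos.2 h) (sub_pos.2 hb))]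
  · have hx2 : 0 < x - p₁ := by nlinarith [sq_nonneg (1 - p₁)]
    nlinarith [mul_pos (sub_pos.2 h) (sub_pos.2 ha), sq_nonneg (1 - p₁), mul_pos hx2 (mul_pos (sub_pos.2 h) (sub_pos.2 ha))]

lemma exu1 (γ x : ℝ) (hγ : 0 < γ) : ∃! p : ℝ, p < 1 ∧ (x - p) * (1 - p) ^ 2 = γ := by
  set δ : ℝ := min 1 (Real.sqrt (γ / (|x| + 1))) with hδdef
  have hxp : (0:ℝ) < |x| + 1 := by positivity
  have hδ1 : δ ≤ 1 := min_le_left _ _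
  have hδpos : 0 < δ := lt_min one_pos (Real.sqrt_pos.2 (by positivity))
  have hδsq : δ ^ 2 ≤ γ / (|x| + 1) := by
    have := min_le_right 1 (Real.sqrt (γ / (|x| + 1)))
    calc δ ^ 2 ≤ (Real.sqrt (γ / (|x| + 1))) ^ 2 := by
          apply pow_le_pow_left₀ hδpos.le this
      _ = γ / (|x| + 1) := Real.sq_sqrt (by positivity)
  set a : ℝ := min (x - γ - 1) (-1) with hadef
  set b : ℝ := 1 - δ with hbdef
  have hab : a < b := by
    have : a ≤ -1 := min_le_right _ _
    have : b ≥ 0 := by simp [hbdef]; linarith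
    linarith [min_le_right (x - γ - 1) (-1 : ℝ)]
  set P : ℝ → ℝ := fun p => (x - p) * (1 - p) ^ 2 - γ with hP
  have hPa : 0 ≤ P a := by
    have h1 : x - a ≥ γ + 1 := by
      have := min_le_left (x - γ - 1) (-1 : ℝ); simp only [hP, hadef] at *; linarith
    have h2 : 1 - a ≥ 2 := by
      have := min_le_right (x - γ - 1) (-1 : ℝ); linarith
    have : (1 - a) ^ 2 ≥ 4 := by nlinarith
    simp only [hP]; nlinarith
  have hPb : P b ≤ 0 := by
    have hxb : x - b ≤ |x| := by
      have : x ≤ |x| := le_abs_self x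
      simp only [hbdef]; linarith
    have hd2 : δ ^ 2 * (|x| + 1) ≤ γ := by
      calc δ ^ 2 * (|x| + 1) ≤ γ / (|x| + 1) * (|x| + 1) := by
            apply mul_le_mul_of_nonneg_right hδsq hxp.le
        _ = γ := by field_simp
    have h1b : (1 - b) = δ := by simp [hbdef]
    simp only [hP, h1b]
    nlinarith [sq_nonneg δ, mul_pos hδpos hδpos]
  have hcont : ContinuousOn P (Icc a b) := (by continuity : Continuous P).continuousOn
  have := intermediate_value_Icc' hab.le hcont
  have h0 : (0:ℝ) ∈ Icc (P b) (P a) := ⟨hPb, hPa⟩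
  obtain ⟨p, hp, hPp⟩ := this h0
  have hp1 : p < 1 := lt_of_le_of_lt hp.2 (by simp [hbdef]; linarith)
  refine ⟨p, ⟨hp1, by simp only [hP] at hPp; linarith⟩, ?_⟩
  intro y hy
  exact uniq1 γ x y p hγ hy ⟨hp1, by simp only [hP] at hPp; linarith⟩

lemma uniq2 (γ x q₁ q₂ : ℝ) (hγ : 0 < γ)
    (h1 : max (x - γ) 0 < q₁ ∧ q₁ ^ 3 + 2 * (γ - x) * q₁ ^ 2 + (γ - x) ^ 2 * q₁ - γ ^ 2 = 0)
    (h2 : max (x - γ) 0 < q₂ ∧ q₂ ^ 3 + 2 * (γ - x) * q₂ ^ 2 + (γ - x) ^ 2 * q₂ - γ ^ 2 = 0) :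
    q₁ = q₂ := by
  obtain ⟨ha, he⟩ := h1; obtain ⟨hb, hf⟩ := h2
  have ha0 : 0 < q₁ := lt_of_le_of_lt (le_max_right _ _) ha
  have hb0 : 0 < q₂ := lt_of_le_of_lt (le_max_right _ _) hb
  have ha1 : 0 < q₁ + γ - x := by have := lt_of_le_of_lt (le_max_left _ _) ha; linarith
  have hb1 : 0 < q₂ + γ - x := by have := lt_of_le_of_lt (le_max_left _ _) hb; linarith
  by_contra hne
  rcases lt_or_gt_of_ne hne with h | h
  · nlinarith [mul_pos ha0 ha1, mul_pos hb0 hb1, mul_pos (sub_pos.2 h) hb1,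
      mul_pos ha1 hb1, mul_pos (mul_pos (sub_pos.2 h) hb1) hb1,
      mul_pos (mul_pos ha0 (sub_pos.2 h)) (add_pos ha1 hb1)]
  · nlinarith [mul_pos ha0 ha1, mul_pos hb0 hb1, mul_pos (sub_pos.2 h) ha1,
      mul_pos ha1 hb1, mul_pos (mul_pos (sub_pos.2 h) ha1) ha1,
      mul_pos (mul_pos hb0 (sub_pos.2 h)) (add_pos ha1 hb1)]

lemma exu2 (γ x : ℝ) (hγ : 0 < γ) : ∃! q : ℝ, max (x - γ) 0 < q ∧
    q ^ 3 + 2 * (γ - x) * q ^ 2 + (γ - x) ^ 2 * q - γ ^ 2 = 0 := by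
  set a : ℝ := max (x - γ) 0 with hadef
  set b : ℝ := a + γ + 1 with hbdef
  set Q : ℝ → ℝ := fun q => q ^ 3 + 2 * (γ - x) * q ^ 2 + (γ - x) ^ 2 * q - γ ^ 2 with hQ
  have ha0 : 0 ≤ a := le_max_right _ _
  have hax : x - γ ≤ a := le_max_left _ _
  have hQa : Q a = -γ ^ 2 := by
    rcases max_choice (x - γ) 0 with h | h
    · simp only [hQ, hadef, h]; ring
    · simp only [hQ, hadef, h]; ring
  have hab : a < b := by simp only [hbdef]; linarith
  have hQb : 0 ≤ Q b := by
    have h1 : γ + 1 ≤ b := by simp only [hbdef]; linarith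
    have h2 : γ + 1 ≤ b + γ - x := by simp only [hbdef]; linarith
    have key : (γ + 1) ^ 3 ≤ b * (b + γ - x) ^ 2 := by
      have hsq : (γ + 1) ^ 2 ≤ (b + γ - x) ^ 2 := by nlinarith
      calc (γ + 1) ^ 3 = (γ + 1) * (γ + 1) ^ 2 := by ring
        _ ≤ b * (b + γ - x) ^ 2 := mul_le_mul h1 hsq (sq_nonneg _) (by linarith)
    have : Q b = b * (b + γ - x) ^ 2 - γ ^ 2 := by simp only [hQ]; ring
    nlinarith
  have hcont : ContinuousOn Q (Icc a b) := (by continuity : Continuous Q).continuousOn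
  have h0 : (0:ℝ) ∈ Icc (Q a) (Q b) := ⟨by rw [hQa]; nlinarith, hQb⟩
  obtain ⟨q, hq, hQq⟩ := intermediate_value_Icc hab.le hcont h0
  have hqa : a < q := by
    rcases eq_or_lt_of_le hq.1 with h | h
    · exfalso; rw [← h] at hQq; rw [hQa] at hQq; nlinarith
    · exact h
  refine ⟨q, ⟨hqa, hQq⟩, fun y hy => uniq2 γ x y q hγ hy ⟨hqa, hQq⟩⟩

lemma prox1 (γ x p : ℝ) (hγ : 0 < γ) (h : IsProxE fhyp γ x p) :
    p < 1 ∧ (x - p) * (1 - p) ^ 2 = γ := by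
  have hnorm : ∀ a b : ℝ, ‖a - b‖ ^ 2 = (a - b) ^ 2 := by
    intro a b; rw [Real.norm_eq_abs, sq_abs]
  have hp1 : p < 1 := by
    by_contra hp
    have h0 := h 0
    rw [fhyp, if_neg hp] at h0
    rw [fhyp, if_pos one_pos] at h0
    rw [EReal.top_add_coe, ← EReal.coe_add] at h0
    exact (EReal.coe_lt_top _).not_ge h0
  -- real minimality on Iio 1
  set F : ℝ → ℝ := fun y => y / (1 - y) + (x - y) ^ 2 / (2 * γ) with hF
  have hmin : ∀ y ∈ Iio (1:ℝ), F p ≤ F y := by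
    intro y hy
    have hy' : y < 1 := hy
    have := h y
    rw [fhyp, if_pos hp1, fhyp, if_pos hy', ← EReal.coe_add, ← EReal.coe_add,
      EReal.coe_le_coe_iff] at this
    simp only [hF, hnorm] at *
    linarith
  have hlocal : IsLocalMin F p :=
    Filter.eventually_of_mem (isOpen_Iio.mem_nhds hp1) hmin
  have hne : (1 : ℝ) - p ≠ 0 := by intro hh; linarith [sub_eq_zero.mp hh]
  have hd1 : HasDerivAt (fun y : ℝ => y / (1 - y))
      ((1 * (1 - p) - p * (0 - 1)) / (1 - p) ^ 2) p :=
    (hasDerivAt_id p).div ((hasDerivAt_const p (1:ℝ)).sub (hasDerivAt_id p)) hne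
  have hd2 : HasDerivAt (fun y : ℝ => (x - y) ^ 2 / (2 * γ))
      ((2 * (x - p) ^ 1 * (0 - 1)) / (2 * γ)) p := by
    exact (((hasDerivAt_const p x).sub (hasDerivAt_id p)).pow 2).div_const (2 * γ)
  have hD := (hd1.add hd2)
  have hzero := hlocal.hasDerivAt_eq_zero hD
  have hγ' : (2 : ℝ) * γ ≠ 0 := by positivity
  constructor
  · exact hp1
  · field_simp at hzero
    nlinarith [sq_nonneg (1 - p), hzero]

lemma prox2 (γ x q : ℝ) (hγ : 0 < γ)
    (h : IsProxE (fun ξ : ℝ => if 0 ≤ ξ then (((Real.sqrt ξ - 1) ^ 2 : ℝ) : EReal) else ⊤) γ x q) :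
    max (x - γ) 0 < q ∧ q ^ 3 + 2 * (γ - x) * q ^ 2 + (γ - x) ^ 2 * q - γ ^ 2 = 0 := by
  have hnorm : ∀ a b : ℝ, ‖a - b‖ ^ 2 = (a - b) ^ 2 := by
    intro a b; rw [Real.norm_eq_abs, sq_abs]
  have h2γ : (0:ℝ) < 2 * γ := by linarith
  have hq0 : 0 ≤ q := by
    by_contra hq
    have h0 := h 1
    simp only [if_neg hq, if_pos (zero_le_one' ℝ)] at h0
    rw [EReal.top_add_coe, ← EReal.coe_add] at h0
    exact (EReal.coe_lt_top _).not_ge h0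
  set G : ℝ → ℝ := fun s => (s - 1) ^ 2 + (x - s ^ 2) ^ 2 / (2 * γ) with hG
  have hmin : ∀ s : ℝ, 0 ≤ s → G (Real.sqrt q) ≤ G s := by
    intro s hs
    have := h (s ^ 2)
    simp only [if_pos hq0, if_pos (sq_nonneg s)] at this
    rw [← EReal.coe_add, ← EReal.coe_add, EReal.coe_le_coe_iff] at this
    simp only [hG, hnorm, Real.sqrt_sq hs, Real.sq_sqrt hq0] at *
    linarith
  rcases eq_or_lt_of_le hq0 with hq | hqpos
  · -- q = 0 : contradiction
    exfalso
    set D : ℝ := 2 * γ + 1 + 2 * |x| with hD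
    have hDpos : (0:ℝ) < D := by positivity
    set s : ℝ := min 1 (2 * γ / D) with hs
    have hspos : 0 < s := lt_min one_pos (by positivity)
    have hs1 : s ≤ 1 := min_le_left _ _
    have hsD : s * D ≤ 2 * γ := by
      have := min_le_right 1 (2 * γ / D)
      calc s * D ≤ (2 * γ / D) * D := mul_le_mul_of_nonneg_right this hDpos.le
        _ = 2 * γ := by field_simp
    have hc := hmin s hspos.le
    rw [← hq] at hc
    simp only [hG, Real.sqrt_zero] at hc
    -- hc : (0-1)^2 + (x - 0^2)^2/(2γ) ≤ (s-1)^2 + (x - s^2)^2/(2γ)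
    have hs2 : s ^ 2 ≤ 1 := by nlinarith
    have hs4 : s ^ 4 ≤ s ^ 2 := by nlinarith [mul_nonneg (sq_nonneg s) (sub_nonneg.2 hs2)]
    have hdiv : ((x - s ^ 2) ^ 2 - x ^ 2) / (2 * γ) < 2 * s - s ^ 2 := by
      rw [div_lt_iff₀ h2γ]
      nlinarith [mul_le_mul_of_nonneg_left hsD hspos.le,
        mul_le_mul_of_nonneg_right (neg_abs_le x) (sq_nonneg s), mul_pos hγ hspos]
    have hsplit : (x - s ^ 2) ^ 2 / (2 * γ) =
        x ^ 2 / (2 * γ) + ((x - s ^ 2) ^ 2 - x ^ 2) / (2 * γ) := by ring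
    have hring : (s - 1) ^ 2 = s ^ 2 - 2 * s + 1 := by ring
    have h01 : ((0:ℝ) - 1) ^ 2 = 1 := by norm_num
    have h02 : (x - 0 ^ 2 : ℝ) ^ 2 = x ^ 2 := by ring
    rw [h01, h02, hsplit, hring] at hc
    linarith
  · -- q > 0
    set s : ℝ := Real.sqrt q with hsdef
    have hspos : 0 < s := Real.sqrt_pos.2 hqpos
    have hq2 : s ^ 2 = q := Real.sq_sqrt hq0
    have hlocal : IsLocalMin G s :=
      Filter.eventually_of_mem (Ici_mem_nhds hspos) (fun y hy => hmin y hy)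
    have hd1 : HasDerivAt (fun t : ℝ => (t - 1) ^ 2) (2 * (s - 1) ^ 1 * 1) s :=
      (((hasDerivAt_id s).sub_const 1).pow 2)
    have hd2 : HasDerivAt (fun t : ℝ => (x - t ^ 2) ^ 2 / (2 * γ))
        ((2 * (x - s ^ 2) ^ 1 * (0 - 2 * s ^ 1 * 1)) / (2 * γ)) s :=
      (((hasDerivAt_const s x).sub ((hasDerivAt_id s).pow 2)).pow 2).div_const (2 * γ)
    have hzero := hlocal.hasDerivAt_eq_zero (hd1.add hd2)
    have hγ' : γ ≠ 0 := ne_of_gt hγ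
    have heq : s ^ 3 + (γ - x) * s = γ := by
      field_simp at hzero; nlinarith [hzero]
    have hqx : 0 < q + γ - x := by
      have : s * (q + γ - x) = γ := by rw [← hq2]; linarith [heq]; 
      nlinarith
    refine ⟨max_lt (by linarith) hqpos, ?_⟩
    rw [← hq2]
    linear_combination (s ^ 3 + (γ - x) * s + γ) * heq

theorem stmt17 (γ : ℝ) (hγ : 0 < γ) (x : ℝ) :
    ((∀ p : ℝ, IsProxE fhyp γ x p → p < 1 ∧ (x - p) * (1 - p) ^ 2 = γ) ∧
      (∃! p : ℝ, p < 1 ∧ (x - p) * (1 - p) ^ 2 = γ)) ∧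
    ((∀ q : ℝ, IsProxE (fun ξ : ℝ => if 0 ≤ ξ then (((Real.sqrt ξ - 1) ^ 2 : ℝ) : EReal)
          else ⊤) γ x q →
        max (x - γ) 0 < q ∧ q ^ 3 + 2 * (γ - x) * q ^ 2 + (γ - x) ^ 2 * q - γ ^ 2 = 0) ∧
      (∃! q : ℝ, max (x - γ) 0 < q ∧
        q ^ 3 + 2 * (γ - x) * q ^ 2 + (γ - x) ^ 2 * q - γ ^ 2 = 0)) := by
  exact ⟨⟨fun p hp => prox1 γ x p hγ hp, exu1 γ x hγ⟩,
    ⟨fun q hq => prox2 γ x q hγ hq, exu2 γ x hγ⟩⟩
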